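/- Let G be a group and suppose G = C_1 ∪ ... ∪ C_n where each C_i is a left coset of a subgroup H_i ≤ G. Let I be the set of indices i such that H_i has finite index in G. Then G = ⋃_{i∈I} C_i, and there exists i ∈ I with [G : H_i] ≤ |I|. -/
import Mathlib

open Pointwise

theorem neumann_coset_covering {G : Type*} [Group G] (n : ℕ)
    (H : Fin n → Subgroup G) (g : Fin n → G)
    (hcover : ∀ x : G, ∃ i : Fin n, x ∈ g i • (H i : Set G)) :
    (∀ x : G, ∃ i : Fin n, (H i).index ≠ 0 ∧ x ∈ g i • (H i : Set G)) ∧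
      ∃ i : Fin n, (H i).index ≠ 0 ∧
        (H i).index ≤ Set.ncard {j : Fin n | (H j).index ≠ 0} := by
  classical
  have hcovers : ⋃ i ∈ (Finset.univ : Finset (Fin n)), g i • (H i : Set G) = Set.univ := by
    ext x
    simpa using hcover x
  have hfilter := Subgroup.leftCoset_cover_filter_FiniteIndex hcovers
  have hmem : ∀ x : G, ∃ i ∈ Finset.univ.filter (fun i => (H i).FiniteIndex),
      x ∈ g i • (H i : Set G) := by
    intro x
    have : x ∈ ⋃ k ∈ Finset.univ.filter (fun i => (H i).FiniteIndex),
        g k • (H k : Set G) := hfilter ▸ Set.mem_univ x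
    simpa using this
  have hset : {j : Fin n | (H j).index ≠ 0} =
      ↑(Finset.univ.filter (fun i => (H i).FiniteIndex)) := by
    ext j
    simp only [Set.mem_setOf_eq, Finset.coe_filter, Finset.mem_univ, true_and]
    constructor
    · exact fun h => ⟨h⟩
    · exact fun ⟨h⟩ => h
  constructor
  · intro x
    obtain ⟨i, hi, hx⟩ := hmem x
    exact ⟨i, (Finset.mem_filter.mp hi).2.index_ne_zero, hx⟩
  · obtain ⟨i, hi, hfi, hle⟩ := Subgroup.exists_index_le_card_of_leftCoset_cover hfilter
    refine ⟨i, hfi.index_ne_zero, ?_⟩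
    rw [hset, Set.ncard_coe_finset]
    exact hle
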